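/- arXiv:1611.09014 — 2 statements merged into one kernel-verified Lean document; each statement's English description precedes it below -/
import Mathlib

section
/- Completeness of shifting with respect to E-interpretations: for every clause set M, if sh(M) is E-satisfiable then M is E-satisfiable, where sh(M) = bs(pf(M)). -/
namespace BUMG

/-- First-order terms over function symbols `F`, with variables indexed by `ℕ`. -/
inductive Term (F : Type) : Type where
  | var : ℕ → Term F
  | app : F → List (Term F) → Term F

namespace Term
variable {F : Type}

/-- The list of variables occurring in a term. -/
def vars : Term F → List ℕ
  | var n => [n]
  | app _ ts => ts.attach.flatMap (fun t => vars t.1)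
decreasing_by simp_wf; have := List.sizeOf_lt_of_mem t.2; omega

/-- The function symbols (with the arity of the occurrence) occurring in a term. -/
def funcs : Term F → List (F × ℕ)
  | var _ => []
  | app f ts => (f, ts.length) :: ts.attach.flatMap (fun t => funcs t.1)
decreasing_by simp_wf; have := List.sizeOf_lt_of_mem t.2; omega

/-- Applying a substitution to a term. -/
def subst (g : ℕ → Term F) : Term F → Term F
  | var n => g n
  | app f ts => app f (ts.attach.map (fun t => subst g t.1))
decreasing_by simp_wf; have := List.sizeOf_lt_of_mem t.2; omega

/-- The number of occurrences of symbols (variables and function symbols) in a term. -/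
def size : Term F → ℕ
  | var _ => 1
  | app _ ts => 1 + (ts.attach.map (fun t => size t.1)).sum
decreasing_by simp_wf; have := List.sizeOf_lt_of_mem t.2; omega

/-- A term is ground iff it contains no variables. -/
def IsGround (t : Term F) : Prop := t.vars = []

def isVar : Term F → Bool
  | var _ => true
  | app _ _ => false

/-- A proper functional term is a term that is neither a variable nor a constant. -/
def isPF : Term F → Bool
  | app _ (_ :: _) => true
  | _ => false

/-- The subterm relation. -/
inductive Subterm : Term F → Term F → Prop
  | refl (t : Term F) : Subterm t t
  | app {s t : Term F} {f : F} {ts : List (Term F)} :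
      t ∈ ts → Subterm s t → Subterm s (app f ts)

end Term

/-- Atoms over predicate symbols `P` and function symbols `F`. -/
structure Atom (P F : Type) where
  pred : P
  args : List (Term F)

namespace Atom
variable {P F : Type}

def subst (g : ℕ → Term F) (a : Atom P F) : Atom P F := ⟨a.pred, a.args.map (Term.subst g)⟩
def vars (a : Atom P F) : List ℕ := a.args.flatMap Term.vars
def IsGround (a : Atom P F) : Prop := a.vars = []
def funcs (a : Atom P F) : List (F × ℕ) := a.args.flatMap Term.funcs
/-- Whether the atom contains a proper functional term. -/
def hasPF (a : Atom P F) : Bool := a.args.any Term.isPF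
def size (a : Atom P F) : ℕ := 1 + (a.args.map Term.size).sum

end Atom

/-- A clause `H₁ ∨ ... ∨ Hₘ ← B₁ ∧ ... ∧ Bₖ` with head atoms `heads`
and body atoms `body`. -/
structure Clause (P F : Type) where
  heads : List (Atom P F)
  body : List (Atom P F)

namespace Clause
variable {P F : Type}

def atoms (C : Clause P F) : List (Atom P F) := C.heads ++ C.body
def vars (C : Clause P F) : List ℕ := C.atoms.flatMap Atom.vars
def bodyVars (C : Clause P F) : List ℕ := C.body.flatMap Atom.vars
def headVars (C : Clause P F) : List ℕ := C.heads.flatMap Atom.vars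
def maxVar (C : Clause P F) : ℕ := C.vars.foldr max 0
def subst (g : ℕ → Term F) (C : Clause P F) : Clause P F :=
  ⟨C.heads.map (Atom.subst g), C.body.map (Atom.subst g)⟩
/-- The predicate symbols (with the arity of the occurrence) occurring in a clause. -/
def preds (C : Clause P F) : List (P × ℕ) := C.atoms.map (fun a => (a.pred, a.args.length))
/-- The function symbols (with the arity of the occurrence) occurring in a clause. -/
def funcs (C : Clause P F) : List (F × ℕ) := C.atoms.flatMap Atom.funcs
/-- The number of occurrences of symbols in a clause. -/
def size (C : Clause P F) : ℕ := (C.atoms.map Atom.size).sum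

/-- A clause is range-restricted iff every variable occurring in it occurs in its body. -/
def RangeRestricted (C : Clause P F) : Prop := ∀ v ∈ C.vars, v ∈ C.bodyVars

/-- A Bernays–Schönfinkel clause: every functional term occurring in it is a constant. -/
def BS (C : Clause P F) : Prop := ∀ fn ∈ C.funcs, fn.2 = 0

end Clause

/-- A clause set is range-restricted iff all its clauses are. -/
def RangeRestrictedSet {P F : Type} (M : Set (Clause P F)) : Prop :=
  ∀ C ∈ M, C.RangeRestricted

/-- The predicate symbols (with arities) occurring in a clause set. -/
def predsOf {P F : Type} (M : Set (Clause P F)) : Set (P × ℕ) :=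
  { pn | ∃ C ∈ M, pn ∈ C.preds }

/-- The function symbols (with arities) occurring in a clause set. -/
def funcsOf {P F : Type} (M : Set (Clause P F)) : Set (F × ℕ) :=
  { fn | ∃ C ∈ M, fn ∈ C.funcs }

/-- A signature: a set of predicate symbols with arities and
a set of function symbols with arities. -/
structure Sig (P F : Type) where
  preds : Set (P × ℕ)
  funcs : Set (F × ℕ)

/-- The clause set `M` is well-formed over the signature `σ`: all symbols occurring in `M`
belong to `σ` (with matching arities). -/
def WFSet {P F : Type} (σ : Sig P F) (M : Set (Clause P F)) : Prop :=
  ∀ C ∈ M, (∀ pn ∈ C.preds, pn ∈ σ.preds) ∧ (∀ fn ∈ C.funcs, fn ∈ σ.funcs)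

/-- The total number of occurrences of symbols in a clause set. -/
noncomputable def setSize {P F : Type} (M : Set (Clause P F)) : ℕ :=
  ∑ᶠ C ∈ M, C.size

/-! ### Herbrand semantics -/

/-- A substitution is ground iff it maps every variable to a ground term. -/
def GroundSubst {F : Type} (g : ℕ → Term F) : Prop := ∀ n, (g n).IsGround

/-- A (Herbrand) interpretation `I` (a set of ground atoms) satisfies a clause iff
it satisfies every ground instance of it. -/
def satClause {P F : Type} (I : Set (Atom P F)) (C : Clause P F) : Prop :=
  ∀ g : ℕ → Term F, GroundSubst g →
    (∀ a ∈ C.body, a.subst g ∈ I) → ∃ a ∈ C.heads, a.subst g ∈ I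

/-- A clause set is satisfiable iff some Herbrand interpretation (a set of ground atoms)
satisfies every ground instance of every clause of it. -/
def Satisfiable {P F : Type} (M : Set (Clause P F)) : Prop :=
  ∃ I : Set (Atom P F), (∀ a ∈ I, a.IsGround) ∧ ∀ C ∈ M, satClause I C

/-! ### Equality axioms and E-satisfiability -/

/-- The equality atom `s ≈ t` (`eqP` being the distinguished equality predicate `≈`). -/
def eqAtom {P F : Type} (eqP : P) (s t : Term F) : Atom P F := ⟨eqP, [s, t]⟩

def rangeVars {F : Type} (n : ℕ) : List (Term F) := (List.range n).map Term.var

def xsList {F : Type} (n : ℕ) : List (Term F) := (List.range n).map (fun i => Term.var (2*i))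
def ysList {F : Type} (n : ℕ) : List (Term F) := (List.range n).map (fun i => Term.var (2*i+1))
def eqConjList {P F : Type} (eqP : P) (n : ℕ) : List (Atom P F) :=
  (List.range n).map (fun i => eqAtom eqP (Term.var (2*i)) (Term.var (2*i+1)))

/-- The equality axioms `EAX`: `≈` is reflexive, symmetric, transitive and compatible with
the given function and predicate symbols. -/
def EAX {P F : Type} (eqP : P) (Ps : Set (P × ℕ)) (Fs : Set (F × ℕ)) : Set (Clause P F) :=
  { ⟨[eqAtom eqP (Term.var 0) (Term.var 0)], []⟩,
    ⟨[eqAtom eqP (Term.var 1) (Term.var 0)], [eqAtom eqP (Term.var 0) (Term.var 1)]⟩,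
    ⟨[eqAtom eqP (Term.var 0) (Term.var 2)],
      [eqAtom eqP (Term.var 0) (Term.var 1), eqAtom eqP (Term.var 1) (Term.var 2)]⟩ } ∪
  { D | ∃ fn ∈ Fs,
      D = ⟨[eqAtom eqP (Term.app fn.1 (xsList fn.2)) (Term.app fn.1 (ysList fn.2))],
           eqConjList eqP fn.2⟩ } ∪
  { D | ∃ pn ∈ Ps,
      D = ⟨[⟨pn.1, ysList pn.2⟩], ⟨pn.1, xsList pn.2⟩ :: eqConjList eqP pn.2⟩ }

/-- A clause set `M` is E-satisfiable iff `M` together with the equality axioms for the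
symbols occurring in `M` is satisfiable. -/
def ESatisfiable {P F : Type} (eqP : P) (M : Set (Clause P F)) : Prop :=
  Satisfiable (M ∪ EAX eqP (predsOf M) (funcsOf M))

/-! ### Range-restricting transformations -/

/-- The atom `dom(t)`. -/
def domAtom {P F : Type} (domP : P) (t : Term F) : Atom P F := ⟨domP, [t]⟩

/-- The term `c` for a constant `c`. -/
def cTerm {F : Type} (c : F) : Term F := Term.app c []

/-- The clause `dom(c) ← ⊤`. -/
def domcClause {P F : Type} (domP : P) (c : F) : Clause P F :=
  ⟨[domAtom domP (cTerm c)], []⟩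

/-- Range-restricting a clause (Step (2) of `crr`, Step (3) of `rr`):
`H ← B` becomes `H ← B ∧ dom(x₁) ∧ ... ∧ dom(xₖ)` where `x₁,...,xₖ` are the variables
occurring in the head but not in the body. -/
def rangeRestrictClause {P F : Type} (domP : P) (C : Clause P F) : Clause P F :=
  ⟨C.heads, C.body ++
    ((C.headVars.filter (fun v => v ∉ C.bodyVars)).dedup).map
      (fun v => domAtom domP (Term.var v))⟩

/-- The argument list of the term abstraction of an atom: argument positions holding
non-variable terms are replaced by fresh variables. -/
def abstrArgs {F : Type} (base : ℕ) (ts : List (Term F)) : List (Term F) :=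
  ts.mapIdx (fun i t => if t.isVar then t else Term.var (base + i))

/-- Step (2) of the `rr` transformation: for each clause `H ← B` of `M`, each body atom
`P(t₁,...,tₙ)` of `B` with term abstraction `P(s₁,...,sₙ)` and abstraction substitution `α`,
the clauses `dom(xᵢ)α ← P(s₁,...,sₙ)` for every `xᵢ` in the domain of `α`. -/
def step2Set {P F : Type} (domP : P) (M : Set (Clause P F)) : Set (Clause P F) :=
  { D | ∃ C ∈ M, ∃ a ∈ C.body, ∃ i : Fin a.args.length,
        (a.args.get i).isVar = false ∧
        D = ⟨[domAtom domP (a.args.get i)],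
             [⟨a.pred, abstrArgs (C.maxVar + 1) a.args⟩]⟩ }

/-- Step (4) of the `rr` transformation: the clauses `dom(xᵢ) ← P(x₁,...,xₙ)` for every
`n`-ary predicate symbol `P` of the signature and every `1 ≤ i ≤ n`. -/
def step4Set {P F : Type} (domP : P) (Ps : Set (P × ℕ)) : Set (Clause P F) :=
  { D | ∃ pn ∈ Ps, ∃ i, i < pn.2 ∧
        D = ⟨[domAtom domP (Term.var i)], [⟨pn.1, rangeVars pn.2⟩]⟩ }

/-- Step (5) of the `rr` transformation: the clauses `dom(xᵢ) ← dom(f(x₁,...,xₙ))` for every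
`n`-ary function symbol `f` of the signature and every `1 ≤ i ≤ n`. -/
def step5Set {P F : Type} (domP : P) (Fs : Set (F × ℕ)) : Set (Clause P F) :=
  { D | ∃ fn ∈ Fs, ∃ i, i < fn.2 ∧
        D = ⟨[domAtom domP (Term.var i)],
             [domAtom domP (Term.app fn.1 (rangeVars fn.2))]⟩ }

/-- The new range-restricting transformation `rr` (over the signature `σ`, with fresh unary
predicate symbol `dom` and constant `c`): the clauses of `M`, the clause `dom(c) ← ⊤` and
the Step-(2) clauses, all range-restricted by Step (3), together with the Step-(4) and
Step-(5) clauses. -/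
def rr {P F : Type} [DecidableEq P] [DecidableEq F] (σ : Sig P F) (domP : P) (c : F)
    (M : Set (Clause P F)) : Set (Clause P F) :=
  (rangeRestrictClause domP '' (M ∪ {domcClause domP c} ∪ step2Set domP M))
  ∪ step4Set domP σ.preds ∪ step5Set domP σ.funcs

/-- Step (3) of the classical transformation `crr`: the clauses
`dom(f(x₁,...,xₙ)) ← dom(x₁) ∧ ... ∧ dom(xₙ)` enumerating the Herbrand universe. -/
def crrStep3 {P F : Type} (domP : P) (Fs : Set (F × ℕ)) : Set (Clause P F) :=
  { D | ∃ fn ∈ Fs,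
        D = ⟨[domAtom domP (Term.app fn.1 (rangeVars fn.2))],
             (List.range fn.2).map (fun i => domAtom domP (Term.var i))⟩ }

/-- The classical range-restricting transformation `crr`. -/
def crr {P F : Type} [DecidableEq P] [DecidableEq F] (σ : Sig P F) (domP : P) (c : F)
    (M : Set (Clause P F)) : Set (Clause P F) :=
  (rangeRestrictClause domP '' (M ∪ {domcClause domP c})) ∪ crrStep3 domP σ.funcs

/-! ### Shifting -/

/-- Partial flattening of the arguments of a non-equational body atom: top-level proper
functional terms are replaced by fresh variables. The `j`-th body atom uses the fresh
variables `base + Nat.pair j i`. -/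
def pfArgs {P F : Type} [DecidableEq P] (eqP : P) (base j : ℕ) (a : Atom P F) : Atom P F :=
  if a.pred = eqP then a
  else ⟨a.pred, a.args.mapIdx (fun i t => if t.isPF then Term.var (base + Nat.pair j i) else t)⟩

/-- The equations `tᵢ ≈ xᵢ` introduced by partially flattening a body atom. -/
def pfEqs {P F : Type} [DecidableEq P] (eqP : P) (base j : ℕ) (a : Atom P F) :
    List (Atom P F) :=
  if a.pred = eqP then []
  else (a.args.mapIdx (fun i t => (i, t))).filterMap
        (fun p => if p.2.isPF then
            some (eqAtom eqP p.2 (Term.var (base + Nat.pair j p.1))) else none)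

/-- Partial flattening of a clause. -/
def pfClause {P F : Type} [DecidableEq P] (eqP : P) (C : Clause P F) : Clause P F :=
  ⟨C.heads,
   C.body.mapIdx (fun j a => pfArgs eqP (C.maxVar + 1) j a) ++
   (C.body.mapIdx (fun j a => pfEqs eqP (C.maxVar + 1) j a)).flatten⟩

/-- The reflexivity unit clause `x ≈ x ← ⊤`. -/
def reflClause {P F : Type} (eqP : P) : Clause P F :=
  ⟨[eqAtom eqP (Term.var 0) (Term.var 0)], []⟩

/-- The partial flattening transformation `pf`. -/
def pf {P F : Type} [DecidableEq P] (eqP : P) (M : Set (Clause P F)) : Set (Clause P F) :=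
  pfClause eqP '' M ∪ {reflClause eqP}

/-- The atom `P̄(t₁,...,tₙ)` for the atom `P(t₁,...,tₙ)`, where `bar` maps each predicate
symbol `P` to the fresh predicate symbol `P̄` uniquely associated with it. -/
def barAtom {P F : Type} (bar : P → P) (a : Atom P F) : Atom P F := ⟨bar a.pred, a.args⟩

/-- Basic shifting of a clause: the body atoms containing a proper functional term are
moved, negated (via `bar`), into the head. -/
def bsClause {P F : Type} (bar : P → P) (C : Clause P F) : Clause P F :=
  ⟨C.heads ++ (C.body.filter (fun a => a.hasPF)).map (barAtom bar),
   C.body.filter (fun a => !a.hasPF)⟩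

/-- The predicate symbols (with arities) of shifted atoms of `M`. -/
def shiftedPreds {P F : Type} (M : Set (Clause P F)) : Set (P × ℕ) :=
  { pn | ∃ C ∈ M, ∃ a ∈ C.body, a.hasPF = true ∧ pn = (a.pred, a.args.length) }

/-- The basic shifting transformation `bs`: shift deep body atoms and add the shifted atom
consistency clauses `⊥ ← P(x₁,...,xₙ) ∧ P̄(x₁,...,xₙ)`. -/
def bs {P F : Type} (bar : P → P) (M : Set (Clause P F)) : Set (Clause P F) :=
  bsClause bar '' M ∪
  { D | ∃ pn ∈ shiftedPreds M,
        D = ⟨[], [⟨pn.1, rangeVars pn.2⟩, ⟨bar pn.1, rangeVars pn.2⟩]⟩ }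

/-- The shifting transformation: `sh(M) = bs(pf(M))`. -/
def sh {P F : Type} [DecidableEq P] (eqP : P) (bar : P → P) (M : Set (Clause P F)) :
    Set (Clause P F) :=
  bs bar (pf eqP M)

/-! ### Blocking -/

/-- The head `x ≈ y ∨ x ≉ y` of the blocking clauses. -/
def blockSplitHead {P F : Type} (eqP neqP : P) : List (Atom P F) :=
  [eqAtom eqP (Term.var 0) (Term.var 1), eqAtom neqP (Term.var 0) (Term.var 1)]

/-- The clause `⊥ ← x ≈ y ∧ x ≉ y`. -/
def eqNeqBot {P F : Type} (eqP neqP : P) : Clause P F :=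
  ⟨[], [eqAtom eqP (Term.var 0) (Term.var 1), eqAtom neqP (Term.var 0) (Term.var 1)]⟩

/-- The unrestricted domain blocking transformation `blud`. -/
def blud {P F : Type} (domP eqP neqP : P) (M : Set (Clause P F)) : Set (Clause P F) :=
  M ∪ { ⟨blockSplitHead eqP neqP, [domAtom domP (Term.var 0), domAtom domP (Term.var 1)]⟩,
        eqNeqBot eqP neqP }

/-- The atom `sub(s,t)`. -/
def subAtom {P F : Type} (subP : P) (s t : Term F) : Atom P F := ⟨subP, [s, t]⟩

/-- The axioms describing the subterm relationship: `sub(x,x) ← dom(x)` and, for every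
`n`-ary function symbol `f` of the signature and `1 ≤ i ≤ n`,
`sub(x, f(x₁,...,xₙ)) ← sub(x,xᵢ) ∧ dom(x) ∧ dom(f(x₁,...,xₙ))`. -/
def subClauses {P F : Type} (domP subP : P) (Fs : Set (F × ℕ)) : Set (Clause P F) :=
  { ⟨[subAtom subP (Term.var 0) (Term.var 0)], [domAtom domP (Term.var 0)]⟩ } ∪
  { D | ∃ fn ∈ Fs, ∃ i, i < fn.2 ∧
        D = ⟨[subAtom subP (Term.var fn.2) (Term.app fn.1 (rangeVars fn.2))],
             [subAtom subP (Term.var fn.2) (Term.var i),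
              domAtom domP (Term.var fn.2),
              domAtom domP (Term.app fn.1 (rangeVars fn.2))]⟩ }

/-- The subterm domain blocking transformation `blsd`. -/
def blsd {P F : Type} (σ : Sig P F) (domP eqP neqP subP : P) (M : Set (Clause P F)) :
    Set (Clause P F) :=
  M ∪ subClauses domP subP σ.funcs ∪
  { ⟨blockSplitHead eqP neqP, [subAtom subP (Term.var 0) (Term.var 1)]⟩,
    eqNeqBot eqP neqP }

/-- The subterm predicate blocking transformation `blsp`. -/
def blsp {P F : Type} (σ : Sig P F) (domP eqP neqP subP : P) (M : Set (Clause P F)) :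
    Set (Clause P F) :=
  M ∪ subClauses domP subP σ.funcs ∪
  { D | ∃ p : P, (p, 1) ∈ σ.preds ∧
        D = ⟨blockSplitHead eqP neqP,
             [subAtom subP (Term.var 0) (Term.var 1),
              ⟨p, [Term.var 0]⟩, ⟨p, [Term.var 1]⟩]⟩ } ∪
  { eqNeqBot eqP neqP }

/-- The unrestricted predicate blocking transformation `blup`. -/
def blup {P F : Type} (σ : Sig P F) (domP eqP neqP : P) (M : Set (Clause P F)) :
    Set (Clause P F) :=
  M ∪ { D | ∃ p : P, (p, 1) ∈ σ.preds ∧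
        D = ⟨blockSplitHead eqP neqP, [⟨p, [Term.var 0]⟩, ⟨p, [Term.var 1]⟩]⟩ } ∪
  { eqNeqBot eqP neqP }

/-! ### Combined transformations -/

/-- The base transformations `rr`, `sh∘rr`, `crr`, `sh∘crr`
(composition read left-to-right, so `(sh∘rr)(M) = rr(sh(M))`). -/
inductive BaseTr | rr | shrr | crr | shcrr

/-- The optional blocking transformations. -/
inductive BlockTr | id | blsd | blsp | blud | blup

def applyBase {P F : Type} [DecidableEq P] [DecidableEq F] (σ : Sig P F) (domP : P) (c : F)
    (eqP : P) (bar : P → P) : BaseTr → Set (Clause P F) → Set (Clause P F)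
  | .rr, M => rr σ domP c M
  | .shrr, M => rr σ domP c (sh eqP bar M)
  | .crr, M => crr σ domP c M
  | .shcrr, M => crr σ domP c (sh eqP bar M)

def applyBlock {P F : Type} (σ : Sig P F) (domP eqP neqP subP : P) :
    BlockTr → Set (Clause P F) → Set (Clause P F)
  | .id, M => M
  | .blsd, M => blsd σ domP eqP neqP subP M
  | .blsp, M => blsp σ domP eqP neqP subP M
  | .blud, M => blud domP eqP neqP M
  | .blup, M => blup σ domP eqP neqP M

/-- A combined transformation: a base transformation optionally followed by a blocking
transformation (composition read left-to-right). -/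
def applyTr {P F : Type} [DecidableEq P] [DecidableEq F] (σ : Sig P F) (domP : P) (c : F)
    (eqP neqP subP : P) (bar : P → P) (b : BaseTr) (τ : BlockTr) (M : Set (Clause P F)) :
    Set (Clause P F) :=
  applyBlock σ domP eqP neqP subP τ (applyBase σ domP c eqP bar b M)

/-- The clause `x ≈ x ← dom(x)`. -/
def reflDomClause {P F : Type} (domP eqP : P) : Clause P F :=
  ⟨[eqAtom eqP (Term.var 0) (Term.var 0)], [domAtom domP (Term.var 0)]⟩

end BUMG

namespace BUMG
namespace Term
variable {F : Type}

theorem subst_congr : ∀ (t : Term F) {g g' : ℕ → Term F},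
    (∀ v ∈ t.vars, g v = g' v) → t.subst g = t.subst g'
  | var n, g, g', h => by
      simp only [subst]; exact h n (by simp [vars])
  | app f ts, g, g', h => by
      simp only [subst, app.injEq, true_and]
      apply List.map_congr_left
      rintro ⟨t, ht⟩ -
      exact subst_congr t (fun v hv => h v (by
        simp only [vars, List.mem_flatMap]
        exact ⟨⟨t, ht⟩, List.mem_attach _ _, hv⟩))
decreasing_by simp_wf; have := List.sizeOf_lt_of_mem ht; omega

theorem subst_ground {g : ℕ → Term F} (hg : GroundSubst g) :
    ∀ t : Term F, (t.subst g).IsGround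
  | var n => by simpa only [subst] using hg n
  | app f ts => by
      simp only [subst, IsGround, vars, List.flatMap_eq_nil_iff]
      rintro ⟨x, hx⟩ -
      obtain ⟨⟨t, ht⟩, -, rfl⟩ := List.mem_map.1 hx
      exact subst_ground hg t
decreasing_by simp_wf; have := List.sizeOf_lt_of_mem ht; omega

end Term

namespace Atom
variable {P F : Type}

theorem subst_congr {a : Atom P F} {g g' : ℕ → Term F}
    (h : ∀ v ∈ a.vars, g v = g' v) : a.subst g = a.subst g' := by
  simp only [subst, mk.injEq, true_and]
  exact List.map_congr_left fun t ht => Term.subst_congr t fun v hv =>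
    h v (by simp only [vars, List.mem_flatMap]; exact ⟨t, ht, hv⟩)

end Atom

theorem le_foldr_max : ∀ (l : List ℕ), ∀ v ∈ l, v ≤ l.foldr max 0
  | [], v, hv => by simp at hv
  | a :: l, v, hv => by
    rcases List.mem_cons.1 hv with rfl | hv
    · exact le_max_left _ _
    · exact le_trans (le_foldr_max l v hv) (le_max_right _ _)

theorem mem_vars_le_maxVar {P F : Type} {C : Clause P F} {v : ℕ} (h : v ∈ C.vars) :
    v ≤ C.maxVar := le_foldr_max _ v h

theorem var_le_maxVar {P F : Type} {C : Clause P F} {a : Atom P F} (ha : a ∈ C.atoms)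
    {v : ℕ} (hv : v ∈ a.vars) : v ≤ C.maxVar :=
  mem_vars_le_maxVar (by simp only [Clause.vars, List.mem_flatMap]; exact ⟨a, ha, hv⟩)

theorem tvar_le_maxVar {P F : Type} {C : Clause P F} {a : Atom P F} (ha : a ∈ C.atoms)
    {t : Term F} (ht : t ∈ a.args) {v : ℕ} (hv : v ∈ t.vars) : v ≤ C.maxVar :=
  var_le_maxVar ha (by simp only [Atom.vars, List.mem_flatMap]; exact ⟨t, ht, hv⟩)

end BUMG
namespace BUMG
variable {P F : Type} [DecidableEq P]

theorem hasPF_pfArgs {eqP : P} {a : Atom P F} (hpred : a.pred ≠ eqP) (base j : ℕ) :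
    (pfArgs eqP base j a).hasPF = false := by
  simp only [pfArgs, if_neg hpred, Atom.hasPF]
  rw [List.any_eq_false]
  intro t ht
  obtain ⟨i, hi, rfl⟩ := List.mem_mapIdx.1 ht
  split
  · simp [Term.isPF]
  · simp_all

theorem hasPF_of_mem_pfEqs {eqP : P} {a b : Atom P F} {base j : ℕ}
    (h : b ∈ pfEqs eqP base j a) : b.hasPF = true := by
  rw [pfEqs] at h
  split at h
  · simp at h
  · obtain ⟨p, hp, hpe⟩ := List.mem_filterMap.1 h
    split at hpe
    · obtain rfl := Option.some.inj hpe
      simp_all [Atom.hasPF, eqAtom]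
    · simp at hpe

theorem pfArgs_subst {eqP : P} {a : Atom P F} (hpred : a.pred ≠ eqP) {base j : ℕ}
    {g g' : ℕ → Term F}
    (hold : ∀ t ∈ a.args, t.subst g' = t.subst g)
    (hfresh : ∀ i (h : i < a.args.length), g' (base + Nat.pair j i) = (a.args[i]).subst g) :
    (pfArgs eqP base j a).subst g' = a.subst g := by
  simp only [pfArgs, if_neg hpred, Atom.subst, Atom.mk.injEq, true_and]
  apply List.ext_getElem
  · simp
  intro n h1 h2
  simp only [List.length_map, List.length_mapIdx] at h1
  simp only [List.getElem_map, List.getElem_mapIdx]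
  split
  · next hPF =>
      show Term.subst g' (Term.var _) = _
      simp only [Term.subst]
      exact hfresh n h1
  · exact hold _ (List.getElem_mem h1)

theorem rangeVars_subst {p : P} {l : List (Term F)} {g g'' : ℕ → Term F}
    (h : ∀ i (hi : i < l.length), g'' i = (l[i]).subst g) :
    (Atom.subst g'' ⟨p, rangeVars l.length⟩) = ⟨p, l.map (Term.subst g)⟩ := by
  simp only [Atom.subst, Atom.mk.injEq, true_and, rangeVars]
  apply List.ext_getElem
  · simp
  intro n h1 h2
  simp only [List.length_map, List.length_range] at h1
  simp only [List.getElem_map, List.getElem_range, Term.subst]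
  exact h n h1

end BUMG
namespace BUMG
variable {P F : Type} [DecidableEq P]

theorem satClause_of_sh (eqP : P) (bar : P → P) (M : Set (Clause P F))
    (J : Set (Atom P F)) (hJ : ∀ D ∈ sh eqP bar M, satClause J D)
    {C : Clause P F} (hC : C ∈ M) : satClause J C := by
  intro g hg hbody
  set base := C.maxVar + 1 with hbase
  set g' : ℕ → Term F := fun n =>
    if n < base then g n
    else Term.subst g ((C.body.getD (Nat.unpair (n - base)).1 ⟨eqP, []⟩).args.getD
      (Nat.unpair (n - base)).2 (Term.var 0)) with hg'def
  have hg' : GroundSubst g' := by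
    intro n
    simp only [hg'def]
    split
    · exact hg n
    · exact Term.subst_ground hg _
  have hsmall : ∀ v ≤ C.maxVar, g' v = g v := by
    intro v hv
    simp only [hg'def]
    rw [if_pos (by omega)]
  have hfresh : ∀ (j : ℕ) (hj : j < C.body.length) (i : ℕ)
      (hi : i < (C.body[j]).args.length),
      g' (base + Nat.pair j i) = ((C.body[j]).args[i]).subst g := by
    intro j hj i hi
    simp only [hg'def]
    rw [if_neg (by omega)]
    rw [Nat.add_sub_cancel_left, Nat.unpair_pair]
    rw [List.getD_eq_getElem _ _ hj, List.getD_eq_getElem _ _ hi]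
  -- helper: substituting atoms of C with g' equals g
  have hatom : ∀ a ∈ C.atoms, a.subst g' = a.subst g := by
    intro a ha
    exact Atom.subst_congr fun v hv => by
      rw [hsmall v (var_le_maxVar ha hv)]
  have hterm : ∀ a ∈ C.atoms, ∀ t ∈ a.args, t.subst g' = t.subst g := by
    intro a ha t ht
    exact Term.subst_congr t fun v hv => by
      rw [hsmall v (tvar_le_maxVar ha ht hv)]
  have hpfmem : pfClause eqP C ∈ pf eqP M :=
    Set.mem_union_left _ (Set.mem_image_of_mem _ hC)
  have hD : bsClause bar (pfClause eqP C) ∈ sh eqP bar M :=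
    Set.mem_union_left _ (Set.mem_image_of_mem _ hpfmem)
  have hbody' : ∀ b ∈ (bsClause bar (pfClause eqP C)).body, b.subst g' ∈ J := by
    intro b hb
    obtain ⟨hbmem, hbnpf⟩ := List.mem_filter.1 hb
    rcases List.mem_append.1 hbmem with h1 | h2
    · obtain ⟨j, hj, rfl⟩ := List.mem_mapIdx.1 h1
      have hjb : C.body[j] ∈ C.atoms := List.mem_append_right _ (List.getElem_mem hj)
      by_cases hpred : (C.body[j]).pred = eqP
      · rw [pfArgs, if_pos hpred, hatom _ hjb]
        exact hbody _ (List.getElem_mem hj)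
      · rw [pfArgs_subst hpred (hterm _ hjb) (hfresh j hj)]
        exact hbody _ (List.getElem_mem hj)
    · exfalso
      obtain ⟨l, hl, hbl⟩ := List.mem_flatten.1 h2
      obtain ⟨j, hj, rfl⟩ := List.mem_mapIdx.1 hl
      have := hasPF_of_mem_pfEqs hbl
      simp [this] at hbnpf
  obtain ⟨h, hh, hhJ⟩ := hJ _ hD g' hg' hbody'
  rcases List.mem_append.1 hh with hhH | hhS
  · exact ⟨h, hhH, by rw [← hatom _ (List.mem_append_left _ hhH)]; exact hhJ⟩
  exfalso
  obtain ⟨e, he, rfl⟩ := List.mem_map.1 hhS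
  obtain ⟨hemem, hepf⟩ := List.mem_filter.1 he
  rcases List.mem_append.1 hemem with h1 | h2
  · -- e comes from a flattened atom: must be an equational atom kept verbatim
    obtain ⟨j, hj, rfl⟩ := List.mem_mapIdx.1 h1
    have hjb : C.body[j] ∈ C.atoms := List.mem_append_right _ (List.getElem_mem hj)
    by_cases hpred : (C.body[j]).pred = eqP
    swap
    · rw [hasPF_pfArgs hpred] at hepf; exact absurd hepf (by simp)
    rw [pfArgs, if_pos hpred] at hepf hhJ hemem
    set a := C.body[j] with ha
    have hpn : ((eqP : P), a.args.length) ∈ shiftedPreds (pf eqP M) :=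
      ⟨pfClause eqP C, hpfmem, a, hemem, hepf, by rw [hpred]⟩
    have hK : (⟨[], [⟨eqP, rangeVars a.args.length⟩,
        ⟨bar eqP, rangeVars a.args.length⟩]⟩ : Clause P F) ∈ sh eqP bar M :=
      Set.mem_union_right _ ⟨(eqP, a.args.length), hpn, rfl⟩
    set g'' : ℕ → Term F := fun i => (a.args.getD i (Term.var 0)).subst g with hg''
    have hgg : GroundSubst g'' := fun i => Term.subst_ground hg _
    have hgi : ∀ i (hi : i < a.args.length), g'' i = (a.args[i]).subst g := by
      intro i hi
      simp only [hg'']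
      rw [List.getD_eq_getElem _ _ hi]
    obtain ⟨x, hx, -⟩ := hJ _ hK g'' hgg (by
      intro b hb
      rcases List.mem_cons.1 hb with rfl | hb'
      · rw [rangeVars_subst hgi]
        have : (⟨eqP, a.args.map (Term.subst g)⟩ : Atom P F) = a.subst g := by
          rw [Atom.subst, hpred]
        rw [this]
        exact hbody _ (List.getElem_mem hj)
      · rcases List.mem_cons.1 hb' with rfl | hb''
        · rw [rangeVars_subst hgi]
          have : (barAtom bar a).subst g' = ⟨bar eqP, a.args.map (Term.subst g)⟩ := by
            rw [barAtom, Atom.subst, hpred]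
            simp only [Atom.mk.injEq, true_and]
            exact List.map_congr_left fun t ht => hterm _ hjb t ht
          rw [← this]
          exact hhJ
        · simp at hb'')
    exact absurd hx List.not_mem_nil
  · -- e is a flattening equation  t ≈ x
    obtain ⟨l, hl, hbl⟩ := List.mem_flatten.1 h2
    obtain ⟨j, hj, rfl⟩ := List.mem_mapIdx.1 hl
    have hjb : C.body[j] ∈ C.atoms := List.mem_append_right _ (List.getElem_mem hj)
    rw [pfEqs] at hbl
    set a := C.body[j] with ha
    by_cases hne : a.pred = eqP
    · rw [if_pos hne] at hbl; simp at hbl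
    rw [if_neg hne] at hbl
    obtain ⟨p, hp, hpe⟩ := List.mem_filterMap.1 hbl
    obtain ⟨i, hi, rfl⟩ := List.mem_mapIdx.1 hp
    split at hpe
    swap
    · simp at hpe
    next hPF =>
    obtain rfl := Option.some.inj hpe
    set t := a.args[i] with hti
    have htg : t.subst g' = t.subst g := hterm _ hjb t (List.getElem_mem hi)
    have hfr : g' (base + Nat.pair j i) = t.subst g := hfresh j hj i hi
    -- hhJ : (barAtom bar (eqAtom eqP t (var (base + pair j i)))).subst g' ∈ J
    have hhJ' : (⟨bar eqP, [t.subst g, t.subst g]⟩ : Atom P F) ∈ J := by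
      have : (barAtom bar (eqAtom eqP t (Term.var (base + Nat.pair j i)))).subst g'
          = ⟨bar eqP, [t.subst g, t.subst g]⟩ := by
        rw [barAtom, eqAtom, Atom.subst]
        simp only [List.map_cons, List.map_nil, Term.subst, htg, hfr]
      rw [← this]
      exact hhJ
    -- reflexivity gives t·g ≈ t·g ∈ J
    have hR : bsClause bar (reflClause eqP) ∈ sh eqP bar M :=
      Set.mem_union_left _ (Set.mem_image_of_mem _ (Set.mem_union_right _ rfl))
    obtain ⟨h0, hh0, hh0J⟩ := hJ _ hR (fun _ => t.subst g)
      (fun _ => Term.subst_ground hg t) (by intro b hb; simp [bsClause, reflClause] at hb)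
    simp only [bsClause, reflClause, List.filter_nil, List.map_nil, List.append_nil,
      List.mem_singleton] at hh0
    subst hh0
    have hreflJ : (⟨eqP, [t.subst g, t.subst g]⟩ : Atom P F) ∈ J := by
      have : (eqAtom eqP (Term.var 0) (Term.var 0)).subst (fun _ => t.subst g)
          = ⟨eqP, [t.subst g, t.subst g]⟩ := by
        rw [eqAtom, Atom.subst]
        simp [Term.subst]
      rw [← this]
      exact hh0J
    -- consistency clause for (eqP, 2)
    have hpn2 : ((eqP : P), 2) ∈ shiftedPreds (pf eqP M) := by
      refine ⟨pfClause eqP C, hpfmem, eqAtom eqP t (Term.var (base + Nat.pair j i)),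
        List.mem_append_right _ ?_, hepf, rfl⟩
      apply List.mem_flatten.2
      refine ⟨_, hl, ?_⟩
      rw [pfEqs, if_neg hne]
      exact List.mem_filterMap.2 ⟨(i, a.args[i]), hp, by rw [if_pos hPF]⟩
    have hK2 : (⟨[], [⟨eqP, rangeVars 2⟩, ⟨bar eqP, rangeVars 2⟩]⟩ : Clause P F)
        ∈ sh eqP bar M :=
      Set.mem_union_right _ ⟨(eqP, 2), hpn2, rfl⟩
    obtain ⟨x, hx, -⟩ := hJ _ hK2 (fun _ => t.subst g) (fun _ => Term.subst_ground hg t) (by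
      intro b hb
      rcases List.mem_cons.1 hb with rfl | hb'
      · have : (Atom.subst (fun _ => t.subst g) ⟨eqP, rangeVars 2⟩)
            = ⟨eqP, [t.subst g, t.subst g]⟩ := by
          rw [Atom.subst]
          simp [rangeVars, Term.subst, List.range_succ]
        rw [this]; exact hreflJ
      · rcases List.mem_cons.1 hb' with rfl | hb''
        · have : (Atom.subst (fun _ => t.subst g) ⟨bar eqP, rangeVars 2⟩)
              = ⟨bar eqP, [t.subst g, t.subst g]⟩ := by
            rw [Atom.subst]
            simp [rangeVars, Term.subst, List.range_succ]
          rw [this]; exact hhJ'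
        · simp at hb'')
    exact absurd hx List.not_mem_nil

end BUMG
namespace BUMG
variable {P F : Type} [DecidableEq P]

theorem funcs_barAtom (bar : P → P) (a : Atom P F) : (barAtom bar a).funcs = a.funcs := rfl

theorem mem_sh_bsClause {eqP : P} {bar : P → P} {M : Set (Clause P F)} {C : Clause P F}
    (hC : C ∈ M) : bsClause bar (pfClause eqP C) ∈ sh eqP bar M :=
  Set.mem_union_left _ (Set.mem_image_of_mem _
    (Set.mem_union_left _ (Set.mem_image_of_mem _ hC)))

theorem predsOf_subset_sh (eqP : P) (bar : P → P) (M : Set (Clause P F)) :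
    predsOf M ⊆ predsOf (sh eqP bar M) := by
  rintro pn ⟨C, hC, hpn⟩
  obtain ⟨a, ha, rfl⟩ := List.mem_map.1 hpn
  have hpfmem : pfClause eqP C ∈ pf eqP M :=
    Set.mem_union_left _ (Set.mem_image_of_mem _ hC)
  rcases List.mem_append.1 ha with hah | hab
  · refine ⟨bsClause bar (pfClause eqP C), mem_sh_bsClause hC, ?_⟩
    exact List.mem_map.2 ⟨a, List.mem_append_left _ (List.mem_append_left _ hah), rfl⟩
  obtain ⟨j, hj, rfl⟩ := List.mem_iff_getElem.1 hab
  set a := C.body[j] with haj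
  have hB1 : ∀ b, b = pfArgs eqP (C.maxVar + 1) j a →
      b ∈ (pfClause eqP C).body := by
    intro b hb
    exact List.mem_append_left _ (List.mem_mapIdx.2 ⟨j, hj, hb.symm⟩)
  by_cases hpred : a.pred = eqP
  · by_cases hPF : a.hasPF
    · -- shifted: use the consistency clause
      have hpn : ((eqP : P), a.args.length) ∈ shiftedPreds (pf eqP M) :=
        ⟨pfClause eqP C, hpfmem, a, hB1 a (by rw [pfArgs, if_pos hpred]), hPF,
          by rw [hpred]⟩
      refine ⟨⟨[], [⟨eqP, rangeVars a.args.length⟩, ⟨bar eqP, rangeVars a.args.length⟩]⟩,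
        Set.mem_union_right _ ⟨(eqP, a.args.length), hpn, rfl⟩, ?_⟩
      refine List.mem_map.2 ⟨⟨eqP, rangeVars a.args.length⟩, ?_, ?_⟩
      · exact List.mem_append_right _ List.mem_cons_self
      · simp [rangeVars, hpred]
    · refine ⟨bsClause bar (pfClause eqP C), mem_sh_bsClause hC, ?_⟩
      refine List.mem_map.2 ⟨a, List.mem_append_right _ ?_, rfl⟩
      exact List.mem_filter.2 ⟨hB1 a (by rw [pfArgs, if_pos hpred]),
        by simp [Bool.not_eq_true] at hPF ⊢; exact hPF⟩
  · refine ⟨bsClause bar (pfClause eqP C), mem_sh_bsClause hC, ?_⟩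
    refine List.mem_map.2 ⟨pfArgs eqP (C.maxVar + 1) j a, List.mem_append_right _ ?_, ?_⟩
    · exact List.mem_filter.2 ⟨hB1 _ rfl, by simp [hasPF_pfArgs hpred]⟩
    · rw [pfArgs, if_neg hpred]
      simp
theorem funcsOf_subset_sh (eqP : P) (bar : P → P) (M : Set (Clause P F)) :
    funcsOf M ⊆ funcsOf (sh eqP bar M) := by
  rintro fn ⟨C, hC, hfn⟩
  obtain ⟨a, ha, hfa⟩ := List.mem_flatMap.1 hfn
  obtain ⟨t, ht, hft⟩ := List.mem_flatMap.1 hfa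
  refine ⟨bsClause bar (pfClause eqP C), mem_sh_bsClause hC, ?_⟩
  have hatomOK : ∀ b ∈ (bsClause bar (pfClause eqP C)).atoms, fn ∈ b.funcs →
      fn ∈ (bsClause bar (pfClause eqP C)).funcs := by
    intro b hb hfb
    exact List.mem_flatMap.2 ⟨b, hb, hfb⟩
  rcases List.mem_append.1 ha with hah | hab
  · exact hatomOK a (List.mem_append_left _ (List.mem_append_left _ hah))
      (List.mem_flatMap.2 ⟨t, ht, hft⟩)
  obtain ⟨j, hj, rfl⟩ := List.mem_iff_getElem.1 hab
  set a := C.body[j] with haj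
  have hB1 : ∀ b, b = pfArgs eqP (C.maxVar + 1) j a →
      b ∈ (pfClause eqP C).body := by
    intro b hb
    exact List.mem_append_left _ (List.mem_mapIdx.2 ⟨j, hj, hb.symm⟩)
  by_cases hpred : a.pred = eqP
  · have haB1 : a ∈ (pfClause eqP C).body := hB1 a (by rw [pfArgs, if_pos hpred])
    by_cases hPF : a.hasPF
    · refine hatomOK (barAtom bar a) (List.mem_append_left _ (List.mem_append_right _
        (List.mem_map.2 ⟨a, List.mem_filter.2 ⟨haB1, hPF⟩, rfl⟩))) ?_
      rw [funcs_barAtom]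
      exact List.mem_flatMap.2 ⟨t, ht, hft⟩
    · refine hatomOK a (List.mem_append_right _ (List.mem_filter.2 ⟨haB1, ?_⟩))
        (List.mem_flatMap.2 ⟨t, ht, hft⟩)
      simp [Bool.not_eq_true] at hPF ⊢; exact hPF
  · obtain ⟨i, hi, rfl⟩ := List.mem_iff_getElem.1 ht
    set t := a.args[i] with hti
    by_cases hPF : t.isPF
    · -- t moved into a flattening equation, shifted to the head
      have he : eqAtom eqP t (Term.var (C.maxVar + 1 + Nat.pair j i))
          ∈ pfEqs eqP (C.maxVar + 1) j a := by
        rw [pfEqs, if_neg hpred]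
        exact List.mem_filterMap.2 ⟨(i, t), List.mem_mapIdx.2 ⟨i, hi, rfl⟩,
          by rw [if_pos hPF]⟩
      have heB2 : eqAtom eqP t (Term.var (C.maxVar + 1 + Nat.pair j i))
          ∈ (pfClause eqP C).body := by
        refine List.mem_append_right _ (List.mem_flatten.2 ⟨_, ?_, he⟩)
        exact List.mem_mapIdx.2 ⟨j, hj, rfl⟩
      refine hatomOK (barAtom bar (eqAtom eqP t (Term.var (C.maxVar + 1 + Nat.pair j i))))
        (List.mem_append_left _ (List.mem_append_right _ (List.mem_map.2
          ⟨_, List.mem_filter.2 ⟨heB2, hasPF_of_mem_pfEqs he⟩, rfl⟩))) ?_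
      rw [funcs_barAtom]
      exact List.mem_flatMap.2 ⟨t, by simp [eqAtom], hft⟩
    · -- t kept in the flattened atom
      refine hatomOK (pfArgs eqP (C.maxVar + 1) j a) (List.mem_append_right _
        (List.mem_filter.2 ⟨hB1 _ rfl, by simp [hasPF_pfArgs hpred]⟩)) ?_
      refine List.mem_flatMap.2 ⟨t, ?_, hft⟩
      rw [pfArgs, if_neg hpred]
      have hlen : i < (a.args.mapIdx
          (fun i t => if t.isPF then Term.var (C.maxVar + 1 + Nat.pair j i) else t)).length := by
        simpa using hi
      have := List.getElem_mapIdx (l := a.args)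
        (f := fun i t => if t.isPF then Term.var (C.maxVar + 1 + Nat.pair j i) else t)
        (i := i) (h := hlen)
      rw [if_neg (by simpa [hti] using hPF)] at this
      show t ∈ List.mapIdx _ a.args
      rw [hti, ← this]
      exact List.getElem_mem hlen

theorem EAX_mono {eqP : P} {Ps Ps' : Set (P × ℕ)} {Fs Fs' : Set (F × ℕ)}
    (hP : Ps ⊆ Ps') (hF : Fs ⊆ Fs') : EAX eqP Ps Fs ⊆ EAX eqP Ps' Fs' := by
  rintro D ((h | ⟨fn, hfn, rfl⟩) | ⟨pn, hpn, rfl⟩)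
  · exact Or.inl (Or.inl h)
  · exact Or.inl (Or.inr ⟨fn, hF hfn, rfl⟩)
  · exact Or.inr ⟨pn, hP hpn, rfl⟩

end BUMG
namespace BUMG

/-- **Completeness of shifting w.r.t. E-interpretations** (Corollary 2): for every clause
set `M`, if `sh(M)` is E-satisfiable then `M` is E-satisfiable, where `sh(M) = bs(pf(M))`. -/
theorem sh_E_completeness {P F : Type} [DecidableEq P] [DecidableEq F]
    (eqP : P) (bar : P → P) (M : Set (Clause P F)) (hfin : M.Finite)
    (hbarInj : Function.Injective bar)
    (hbarFresh : ∀ p n, (bar p, n) ∉ predsOf (pf eqP M))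
    (hsat : ESatisfiable eqP (sh eqP bar M)) :
    ESatisfiable eqP M := by
  obtain ⟨J, hgJ, hJ⟩ := hsat
  refine ⟨J, hgJ, ?_⟩
  rintro C (hC | hC)
  · exact satClause_of_sh eqP bar M J (fun D hD => hJ D (Or.inl hD)) hC
  · exact hJ C (Or.inr (EAX_mono (predsOf_subset_sh eqP bar M)
      (funcsOf_subset_sh eqP bar M) hC))

end BUMG
end

section
/- Soundness of unrestricted domain blocking: for every clause set M, if M is E-satisfiable then blud(M) is E-satisfiable. -/
namespace BUMG

@[simp] lemma subst_var {F : Type} (g : ℕ → Term F) (n : ℕ) :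
    Term.subst g (Term.var n) = g n := by rw [Term.subst]

@[simp] lemma funcs_var {F : Type} (n : ℕ) : Term.funcs (F := F) (Term.var n) = [] := by
  rw [Term.funcs]

@[simp] lemma vars_var {F : Type} (n : ℕ) : Term.vars (F := F) (Term.var n) = [n] := by
  rw [Term.vars]

@[simp] lemma subst_eqAtom {P F : Type} (q : P) (s t : Term F) (g : ℕ → Term F) :
    (eqAtom q s t).subst g = eqAtom q (s.subst g) (t.subst g) := by
  simp [eqAtom, Atom.subst]

@[simp] lemma subst_domAtom {P F : Type} (q : P) (s : Term F) (g : ℕ → Term F) :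
    (domAtom q s).subst g = domAtom q (s.subst g) := by
  simp [domAtom, Atom.subst]

@[simp] lemma pred_subst {P F : Type} (a : Atom P F) (g : ℕ → Term F) :
    (a.subst g).pred = a.pred := rfl

lemma pred_ne_of_fresh {P F : Type} {M : Set (Clause P F)} {neqP : P}
    (hneqFresh : ∀ n, (neqP, n) ∉ predsOf M) {C : Clause P F} (hC : C ∈ M)
    {a : Atom P F} (ha : a ∈ C.atoms) : a.pred ≠ neqP := by
  intro h
  exact hneqFresh a.args.length ⟨C, hC, by
    simp only [Clause.preds, List.mem_map]; exact ⟨a, ha, by rw [h]⟩⟩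

lemma mem_eqConjList {P F : Type} {eqP : P} {n : ℕ} {a : Atom P F}
    (h : a ∈ eqConjList (F := F) eqP n) :
    ∃ i, i < n ∧ a = eqAtom eqP (Term.var (2*i)) (Term.var (2*i+1)) := by
  simp only [eqConjList, List.mem_map, List.mem_range] at h
  obtain ⟨i, hi, rfl⟩ := h
  exact ⟨i, hi, rfl⟩

theorem blud_soundness' {P F : Type} [DecidableEq P] [DecidableEq F]
    (domP eqP neqP : P) (M : Set (Clause P F))
    (hdomM : (domP, 1) ∈ predsOf M)
    (hneqFresh : ∀ n, (neqP, n) ∉ predsOf M)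
    (hneqEq : neqP ≠ eqP)
    (hsat : ESatisfiable eqP M) :
    ESatisfiable eqP (blud domP eqP neqP M) := by
  obtain ⟨I, hIground, hI⟩ := hsat
  classical
  -- the new interpretation
  set N : Set (Atom P F) :=
    { a | ∃ s t : Term F, s.IsGround ∧ t.IsGround ∧ a = ⟨neqP, [s, t]⟩ ∧ eqAtom eqP s t ∉ I }
    with hN
  set I' : Set (Atom P F) := { a | a ∈ I ∧ a.pred ≠ neqP } ∪ N with hI'
  have hNin : ∀ {s t : Term F}, s.IsGround → t.IsGround → eqAtom eqP s t ∉ I →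
      (⟨neqP, [s, t]⟩ : Atom P F) ∈ I' := by
    intro s t hs ht hst
    exact Or.inr ⟨s, t, hs, ht, rfl, hst⟩
  have hNpred : ∀ a ∈ N, a.pred = neqP := by
    rintro a ⟨s, t, _, _, rfl, _⟩; rfl
  have hEqI' : ∀ {s t : Term F}, eqAtom eqP s t ∈ I' ↔ eqAtom eqP s t ∈ I := by
    intro s t
    constructor
    · rintro (⟨h, _⟩ | hn)
      · exact h
      · exact absurd (hNpred _ hn) (by simpa [eqAtom] using hneqEq.symm)
    · intro h; exact Or.inl ⟨h, by simpa [eqAtom] using hneqEq.symm⟩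
  have hNeqI' : ∀ {s t : Term F}, (⟨neqP, [s, t]⟩ : Atom P F) ∈ I' → eqAtom eqP s t ∉ I := by
    rintro s t (⟨_, hp⟩ | ⟨s', t', _, _, heq, hst⟩)
    · exact absurd rfl hp
    · cases heq; exact hst
  -- symmetry and transitivity in I
  have hsymC : (⟨[eqAtom eqP (Term.var 1) (Term.var 0)], [eqAtom eqP (Term.var 0) (Term.var 1)]⟩ : Clause P F)
      ∈ M ∪ EAX eqP (predsOf M) (funcsOf M) := by
    right; left; left; right; left; rfl
  have htransC : (⟨[eqAtom eqP (Term.var 0) (Term.var 2)],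
      [eqAtom eqP (Term.var 0) (Term.var 1), eqAtom eqP (Term.var 1) (Term.var 2)]⟩ : Clause P F)
      ∈ M ∪ EAX eqP (predsOf M) (funcsOf M) := by
    right; left; left; right; right; rfl
  have symI : ∀ s t : Term F, s.IsGround → t.IsGround →
      eqAtom eqP s t ∈ I → eqAtom eqP t s ∈ I := by
    intro s t hs ht hst
    have hgg : GroundSubst (fun n => if n = 0 then s else t) := by
      intro n; dsimp only; split <;> assumption
    have h := hI _ hsymC (fun n => if n = 0 then s else t) hgg
    have hb : ∀ a ∈ [eqAtom eqP (Term.var 0) (Term.var 1)],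
        a.subst (fun n => if n = 0 then s else t) ∈ I := by
      intro a ha; rw [List.mem_singleton] at ha; subst ha
      rw [subst_eqAtom, subst_var, subst_var]; simpa using hst
    obtain ⟨a, ha, hval⟩ := h hb
    rw [List.mem_singleton] at ha; subst ha
    rw [subst_eqAtom, subst_var, subst_var] at hval; simpa using hval
  have transI : ∀ s t u : Term F, s.IsGround → t.IsGround → u.IsGround →
      eqAtom eqP s t ∈ I → eqAtom eqP t u ∈ I → eqAtom eqP s u ∈ I := by
    intro s t u hs ht hu h1 h2
    have hgg : GroundSubst (fun n => if n = 0 then s else if n = 1 then t else u) := by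
      intro n; dsimp only
      split
      · exact hs
      split <;> assumption
    have h := hI _ htransC _ hgg
    have hb : ∀ a ∈ [eqAtom eqP (Term.var 0) (Term.var 1), eqAtom eqP (Term.var 1) (Term.var 2)],
        a.subst (fun n => if n = 0 then s else if n = 1 then t else u) ∈ I := by
      intro a ha
      rcases ha with (_ | ⟨_,(_| ⟨_,h⟩)⟩)
      · rw [subst_eqAtom, subst_var, subst_var]; simpa using h1
      · rw [subst_eqAtom, subst_var, subst_var]; simpa using h2
      · cases h
    obtain ⟨a, ha, hval⟩ := h hb
    rw [List.mem_singleton] at ha; subst ha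
    rw [subst_eqAtom, subst_var, subst_var] at hval; simpa using hval
  -- lifting lemma
  have lift : ∀ C : Clause P F, (∀ a ∈ C.atoms, a.pred ≠ neqP) →
      satClause I C → satClause I' C := by
    intro C hC hsatC g hg hbody
    obtain ⟨a, ha, haI⟩ := hsatC g hg (by
      intro a ha
      rcases hbody a ha with (⟨h, _⟩ | hn)
      · exact h
      · exact absurd (hNpred _ hn) (by
          simpa using hC a (by simp [Clause.atoms, ha])))
    exact ⟨a, ha, Or.inl ⟨haI, by
      simpa using hC a (by simp [Clause.atoms, ha])⟩⟩
  -- groundness of substituted terms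
  have hgr : ∀ {g : ℕ → Term F}, GroundSubst g → ∀ n, (g n).IsGround := fun hg n => hg n
  refine ⟨I', ?_, ?_⟩
  · rintro a (⟨h, _⟩ | ⟨s, t, hs, ht, rfl, _⟩)
    · exact hIground a h
    · simp [Atom.IsGround, Atom.vars, Term.IsGround.eq_1] at hs ht ⊢
      simp [hs, ht]
  have hxs : xsList (F := F) 2 = [Term.var 0, Term.var 2] := by
    simp [xsList, List.range_succ]
  have hys : ysList (F := F) 2 = [Term.var 1, Term.var 3] := by
    simp [ysList, List.range_succ]
  have hconj : eqConjList (F := F) eqP 2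
      = [eqAtom eqP (Term.var 0) (Term.var 1), eqAtom eqP (Term.var 2) (Term.var 3)] := by
    simp [eqConjList, List.range_succ]
  intro C hC
  rcases hC with hC | hC
  · -- C ∈ blud M
    rcases hC with hC | hC
    · -- C ∈ M
      exact lift C (fun a ha => pred_ne_of_fresh hneqFresh hC ha) (hI C (Or.inl hC))
    · rcases hC with rfl | rfl
      · -- split clause
        intro g hg _
        by_cases h : eqAtom eqP (g 0) (g 1) ∈ I
        · refine ⟨eqAtom eqP (Term.var 0) (Term.var 1), by simp [blockSplitHead], ?_⟩
          rw [subst_eqAtom, subst_var, subst_var]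
          exact hEqI'.mpr h
        · refine ⟨eqAtom neqP (Term.var 0) (Term.var 1), by simp [blockSplitHead], ?_⟩
          rw [subst_eqAtom, subst_var, subst_var]
          exact hNin (hg 0) (hg 1) h
      · -- eqNeqBot
        intro g hg hbody
        exfalso
        have h1 := hbody (eqAtom eqP (Term.var 0) (Term.var 1)) (by simp [eqNeqBot])
        have h2 := hbody (eqAtom neqP (Term.var 0) (Term.var 1)) (by simp [eqNeqBot])
        rw [subst_eqAtom, subst_var, subst_var] at h1 h2
        exact hNeqI' h2 (hEqI'.mp h1)
  · -- C ∈ EAX eqP (predsOf blud) (funcsOf blud)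
    rcases hC with (hC | hC) | hC
    · -- refl, sym, trans
      have hatoms : ∀ a ∈ C.atoms, a.pred = eqP := by
        rcases hC with rfl | rfl | rfl <;>
          · rintro a ha
            simp [Clause.atoms] at ha
            rcases ha with rfl | rfl | rfl <;> rfl
      have hmem : C ∈ M ∪ EAX eqP (predsOf M) (funcsOf M) := by
        rcases hC with rfl | rfl | rfl
        · right; left; left; left; rfl
        · exact hsymC
        · exact htransC
      exact lift C (fun a ha => (hatoms a ha) ▸ (Ne.symm hneqEq)) (hI C hmem)
    · -- function congruence
      obtain ⟨fn, hfn, rfl⟩ := hC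
      have hfnM : fn ∈ funcsOf M := by
        obtain ⟨D, hD, hfnD⟩ := hfn
        rcases hD with (hD | (rfl | rfl))
        · exact ⟨D, hD, hfnD⟩
        · simp [Clause.funcs, Clause.atoms, blockSplitHead, domAtom, eqAtom, Atom.funcs] at hfnD
        · simp [Clause.funcs, Clause.atoms, eqNeqBot, eqAtom, Atom.funcs] at hfnD
      have hatoms : ∀ a ∈ (Clause.mk (P := P) (F := F)
          [eqAtom eqP (Term.app fn.1 (xsList fn.2)) (Term.app fn.1 (ysList fn.2))]
          (eqConjList eqP fn.2)).atoms, a.pred = eqP := by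
        rintro a ha
        simp [Clause.atoms] at ha
        rcases ha with rfl | ha
        · rfl
        · obtain ⟨i, _, rfl⟩ := mem_eqConjList ha; rfl
      exact lift _ (fun a ha => (hatoms a ha) ▸ (Ne.symm hneqEq))
        (hI _ (Or.inr (Or.inl (Or.inr ⟨fn, hfnM, rfl⟩))))
    · -- predicate congruence
      obtain ⟨pn, hpn, rfl⟩ := hC
      have hpn' : pn ∈ predsOf M ∨ pn = (eqP, 2) ∨ pn = (neqP, 2) := by
        obtain ⟨D, hD, hpnD⟩ := hpn
        rcases hD with (hD | (rfl | rfl))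
        · exact Or.inl ⟨D, hD, hpnD⟩
        · simp [Clause.preds, Clause.atoms, blockSplitHead, domAtom, eqAtom] at hpnD
          rcases hpnD with rfl | rfl | rfl
          · exact Or.inr (Or.inl rfl)
          · exact Or.inr (Or.inr rfl)
          · exact Or.inl hdomM
        · simp [Clause.preds, Clause.atoms, eqNeqBot, eqAtom] at hpnD
          rcases hpnD with rfl | rfl
          · exact Or.inr (Or.inl rfl)
          · exact Or.inr (Or.inr rfl)
      have congAtoms : ∀ q : P, ∀ n : ℕ, ∀ a ∈ (Clause.mk (P := P) (F := F)
          [⟨q, ysList n⟩] (⟨q, xsList n⟩ :: eqConjList eqP n)).atoms,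
          a.pred = q ∨ a.pred = eqP := by
        rintro q n a ha
        simp [Clause.atoms] at ha
        rcases ha with rfl | rfl | ha
        · exact Or.inl rfl
        · exact Or.inl rfl
        · obtain ⟨i, _, rfl⟩ := mem_eqConjList ha; exact Or.inr rfl
      rcases hpn' with hpnM | rfl | rfl
      · -- pn occurs in M
        have hne : pn.1 ≠ neqP := by
          rintro rfl; exact hneqFresh pn.2 (by simpa using hpnM)
        refine lift _ (fun a ha => ?_) (hI _ (Or.inr (Or.inr ⟨pn, hpnM, rfl⟩)))
        rcases congAtoms pn.1 pn.2 a ha with h | h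
        · rw [h]; exact hne
        · rw [h]; exact Ne.symm hneqEq
      · -- pn = (eqP, 2): derive congruence from sym/trans
        refine lift _ (fun a ha => ?_) ?_
        · rcases congAtoms eqP 2 a ha with h | h <;> (rw [h]; exact Ne.symm hneqEq)
        · show satClause I ⟨[⟨eqP, ysList 2⟩], ⟨eqP, xsList 2⟩ :: eqConjList eqP 2⟩
          rw [hxs, hys, hconj]
          intro g hg hbody
          have hxy := hbody (⟨eqP, [Term.var 0, Term.var 2]⟩ : Atom P F) (by simp)
          have h01 := hbody (eqAtom eqP (Term.var 0) (Term.var 1)) (by simp)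
          have h23 := hbody (eqAtom eqP (Term.var 2) (Term.var 3)) (by simp)
          rw [subst_eqAtom, subst_var, subst_var] at h01 h23
          have hxy' : eqAtom eqP (g 0) (g 2) ∈ I := by
            simpa [Atom.subst, eqAtom] using hxy
          have h10 := symI _ _ (hg 0) (hg 1) h01
          have h12 := transI _ _ _ (hg 1) (hg 0) (hg 2) h10 hxy'
          have h13 := transI _ _ _ (hg 1) (hg 2) (hg 3) h12 h23
          refine ⟨⟨eqP, [Term.var 1, Term.var 3]⟩, List.mem_singleton_self _, ?_⟩
          simpa [Atom.subst, eqAtom] using h13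
      · -- pn = (neqP, 2)
        show satClause I' ⟨[⟨neqP, ysList 2⟩], ⟨neqP, xsList 2⟩ :: eqConjList eqP 2⟩
        rw [hxs, hys, hconj]
        intro g hg hbody
        have hxy := hbody (⟨neqP, [Term.var 0, Term.var 2]⟩ : Atom P F) (by simp)
        have h01 := hbody (eqAtom eqP (Term.var 0) (Term.var 1)) (by simp)
        have h23 := hbody (eqAtom eqP (Term.var 2) (Term.var 3)) (by simp)
        rw [subst_eqAtom, subst_var, subst_var] at h01 h23
        have hxy' : (⟨neqP, [g 0, g 2]⟩ : Atom P F) ∈ I' := by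
          simpa [Atom.subst] using hxy
        have h01' := hEqI'.mp h01
        have h23' := hEqI'.mp h23
        have h02 := hNeqI' hxy'
        have h13 : eqAtom eqP (g 1) (g 3) ∉ I := by
          intro h13
          have h03 := transI _ _ _ (hg 0) (hg 1) (hg 3) h01' h13
          have h32 := symI _ _ (hg 2) (hg 3) h23'
          exact h02 (transI _ _ _ (hg 0) (hg 3) (hg 2) h03 h32)
        refine ⟨⟨neqP, [Term.var 1, Term.var 3]⟩, List.mem_singleton_self _, ?_⟩
        have hmem : (⟨neqP, [g 1, g 3]⟩ : Atom P F) ∈ I' := hNin (hg 1) (hg 3) h13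
        simpa [Atom.subst] using hmem

/-- **Soundness of unrestricted domain blocking**: for every clause set `M`, if `M` is
E-satisfiable then `blud(M)` is E-satisfiable. `M` contains the unary predicate `dom`, and
`≉` (`neqP`) is a fresh binary predicate symbol uniquely associated with `≈` and not
occurring in `M`. -/
theorem blud_soundness {P F : Type} [DecidableEq P] [DecidableEq F]
    (domP eqP neqP : P) (M : Set (Clause P F)) (hfin : M.Finite)
    (hdomM : (domP, 1) ∈ predsOf M)
    (hneqFresh : ∀ n, (neqP, n) ∉ predsOf M)
    (hneqEq : neqP ≠ eqP)
    (hsat : ESatisfiable eqP M) :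
    ESatisfiable eqP (blud domP eqP neqP M) :=
  blud_soundness' domP eqP neqP M hdomM hneqFresh hneqEq hsat

end BUMG
end
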